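/- Let X be a Lie algebra over ℝ and R : X → X a hereditary operator (vanishing Nijenhuis torsion). Suppose x₀, y₁ ∈ X satisfy L_{x₀}R = 0, L_{y₁}R = −R², and [x₀, y₁] = 2 R x₀. Define xₙ = Rⁿ x₀ (n ≥ 0) and yₙ = R^{n−1} y₁ (n ≥ 1). Then [xₙ, xₘ] = 0 for all m, n ≥ 0. -/
import Mathlib


/-- Under the hypotheses `N_R = 0`, `L_{x₀}R = 0`, `L_{y₁}R = −R²`,
`[x₀,y₁] = 2Rx₀`, the symmetries `xₙ = Rⁿx₀` commute: `[xₙ, xₘ] = 0`. -/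
theorem symmetries_commute {X : Type*} [LieRing X] [LieAlgebra ℝ X]
    (R : X →ₗ[ℝ] X)
    (hR : ∀ x y : X,
      ⁅R x, R y⁆ - R ⁅R x, y⁆ - R ⁅x, R y⁆ + R (R ⁅x, y⁆) = 0)
    (x₀ y₁ : X)
    (hx₀ : ∀ y : X, ⁅x₀, R y⁆ - R ⁅x₀, y⁆ = 0)
    (hy₁ : ∀ y : X, ⁅y₁, R y⁆ - R ⁅y₁, y⁆ = -(R (R y)))
    (hxy : ⁅x₀, y₁⁆ = (2 : ℝ) • R x₀) :
    ∀ m n : ℕ, ⁅(R ^ n) x₀, (R ^ m) x₀⁆ = 0 := by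
  -- First: ⁅x₀, Rᵐ x₀⁆ = 0
  have h0 : ∀ m : ℕ, ⁅x₀, (R ^ m) x₀⁆ = 0 := by
    intro m
    induction m with
    | zero => simp
    | succ m ih =>
      have : (R ^ (m + 1)) x₀ = R ((R ^ m) x₀) := by
        rw [pow_succ', Module.End.mul_apply]
      rw [this]
      have h := hx₀ ((R ^ m) x₀)
      rw [sub_eq_zero] at h
      rw [h, ih, map_zero]
  -- Strong induction on n + m
  have key : ∀ k n m : ℕ, n + m ≤ k → ⁅(R ^ n) x₀, (R ^ m) x₀⁆ = 0 := by
    intro k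
    induction k with
    | zero =>
      intro n m h
      have hn : n = 0 := by omega
      have hm : m = 0 := by omega
      subst hn; subst hm; simp
    | succ k ih =>
      intro n m h
      match n, m with
      | 0, m => exact h0 m
      | n + 1, 0 =>
        rw [← lie_skew]; simp [h0]
      | n + 1, m + 1 =>
        have e1 : (R ^ (n + 1)) x₀ = R ((R ^ n) x₀) := by rw [pow_succ', Module.End.mul_apply]
        have e2 : (R ^ (m + 1)) x₀ = R ((R ^ m) x₀) := by rw [pow_succ', Module.End.mul_apply]
        rw [e1, e2]
        have hN := hR ((R ^ n) x₀) ((R ^ m) x₀)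
        rw [← e1, ← e2] at hN
        have t1 : ⁅(R ^ (n + 1)) x₀, (R ^ m) x₀⁆ = 0 := ih (n + 1) m (by omega)
        have t2 : ⁅(R ^ n) x₀, (R ^ (m + 1)) x₀⁆ = 0 := ih n (m + 1) (by omega)
        have t3 : ⁅(R ^ n) x₀, (R ^ m) x₀⁆ = 0 := ih n m (by omega)
        rw [t1, t2, t3] at hN
        simpa [e1, e2] using hN
  intro m n
  exact key (n + m) n m le_rfl
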